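/- Let (S,F,μ) be a probability space, A ⊆ F a sub-σ-algebra such that (S,A,μ) is separable (A has a countable dense subset with respect to the pseudometric d(X,Y) = μ(X Δ Y)), and W : S² → ℝ a bounded F⊗F-measurable function. If g is a version of the conditional expectation E(W | A⊗F), then for μ-almost every y ∈ S, the slice function x ↦ g(x,y) is a version of the conditional expectation E(W_y | A), where W_y(x) = W(x,y). -/

import Mathlib

open MeasureTheory
open scoped ENNReal symmDiff

section Aux

/-- Slices of a product-measurable function are measurable. -/
lemma slice_meas' {α β : Type*} {ma : MeasurableSpace α} {mb : MeasurableSpace β}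
    {g : α × β → ℝ} (hg : Measurable[ma.prod mb] g) (y : β) :
    Measurable[ma] fun x => g (x, y) := by
  letI := ma; letI := mb
  exact hg.comp measurable_prodMk_right

lemma measurableSet_prod' {α β : Type*} {ma : MeasurableSpace α} {mb : MeasurableSpace β}
    {A : Set α} {B : Set β} (hA : MeasurableSet[ma] A) (hB : MeasurableSet[mb] B) :
    MeasurableSet[ma.prod mb] (A ×ˢ B) := by
  letI := ma; letI := mb
  exact hA.prod hB

/-- Bound on a set integral of an a.e.-bounded function. -/
lemma abs_setIntegral_le {α : Type*} [MeasurableSpace α] {μ : Measure α} [IsFiniteMeasure μ]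
    {u : α → ℝ} {C : ℝ} (hu : Integrable u μ) (hbd : ∀ᵐ x ∂μ, |u x| ≤ C)
    (v : Set α) : |∫ x in v, u x ∂μ| ≤ C * (μ v).toReal := by
  have h1 : |∫ x in v, u x ∂μ| ≤ ∫ x in v, |u x| ∂μ := by
    simpa [Real.norm_eq_abs] using
      norm_integral_le_integral_norm (μ := μ.restrict v) u
  have h2 : ∫ x in v, |u x| ∂μ ≤ ∫ x in v, C ∂μ := by
    refine integral_mono_ae (hu.abs.restrict) (integrable_const C) ?_
    exact ae_restrict_of_ae hbd
  have h3 : ∫ x in v, C ∂μ = (μ v).toReal * C := by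
    rw [setIntegral_const, smul_eq_mul, measureReal_def]
  calc |∫ x in v, u x ∂μ| ≤ ∫ x in v, C ∂μ := h1.trans h2
    _ = C * (μ v).toReal := by rw [h3, mul_comm]

/-- The difference of set integrals is bounded by the measure of the symmetric
difference. -/
lemma abs_setIntegral_sub_le {α : Type*} [MeasurableSpace α] {μ : Measure α}
    [IsFiniteMeasure μ] {u : α → ℝ} {C : ℝ} (hu : Integrable u μ)
    (hbd : ∀ᵐ x ∂μ, |u x| ≤ C) {s t : Set α} (hs : MeasurableSet s) (ht : MeasurableSet t) :
    |∫ x in s, u x ∂μ - ∫ x in t, u x ∂μ| ≤ C * (μ (s ∆ t)).toReal := by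
  have hsplit : ∀ v w : Set α, MeasurableSet w →
      ∫ x in v, u x ∂μ = ∫ x in v ∩ w, u x ∂μ + ∫ x in v \ w, u x ∂μ := by
    intro v w hw
    exact (integral_inter_add_diff hw hu.integrableOn).symm
  rw [hsplit s t ht, hsplit t s hs, Set.inter_comm t s]
  have key : ∫ x in s ∩ t, u x ∂μ + ∫ x in s \ t, u x ∂μ -
      (∫ x in s ∩ t, u x ∂μ + ∫ x in t \ s, u x ∂μ) =
      ∫ x in s \ t, u x ∂μ - ∫ x in t \ s, u x ∂μ := by ring
  rw [key]
  have h1 := abs_setIntegral_le hu hbd (s \ t)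
  have h2 := abs_setIntegral_le hu hbd (t \ s)
  have hm : μ (s ∆ t) = μ (s \ t) + μ (t \ s) := by
    rw [Set.symmDiff_def]
    exact measure_union disjoint_sdiff_sdiff (ht.diff hs)
  have hfin1 : μ (s \ t) ≠ ∞ := (measure_lt_top μ _).ne
  have hfin2 : μ (t \ s) ≠ ∞ := (measure_lt_top μ _).ne
  calc |∫ x in s \ t, u x ∂μ - ∫ x in t \ s, u x ∂μ|
      ≤ |∫ x in s \ t, u x ∂μ| + |∫ x in t \ s, u x ∂μ| := abs_sub _ _
    _ ≤ C * (μ (s \ t)).toReal + C * (μ (t \ s)).toReal := add_le_add h1 h2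
    _ = C * (μ (s ∆ t)).toReal := by
        rw [hm, ENNReal.toReal_add hfin1 hfin2]; ring

variable {α β : Type*} [MeasurableSpace α] [MeasurableSpace β]
  {μ : Measure α} {ν : Measure β} [SFinite μ] [SFinite ν]

/-- Integrability of partial set-integrals of an integrable function on a product. -/
lemma fubini_slice_integrable {u : α × β → ℝ} (hu : Integrable u (μ.prod ν))
    {A : Set α} (hA : MeasurableSet A) :
    Integrable (fun y => ∫ x in A, u (x, y) ∂μ) ν := by
  have h1 : Integrable u ((μ.restrict A).prod ν) := by
    rw [Measure.restrict_prod_eq_prod_univ]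
    exact hu.integrableOn
  exact h1.integral_prod_right

/-- Iterated set-integral identity on a product. -/
lemma fubini_slice_eq {u : α × β → ℝ} (hu : Integrable u (μ.prod ν))
    {A : Set α} (hA : MeasurableSet A) {B : Set β} (hB : MeasurableSet B) :
    ∫ y in B, ∫ x in A, u (x, y) ∂μ ∂ν = ∫ p in A ×ˢ B, u p ∂(μ.prod ν) := by
  have h1 : Integrable u ((μ.restrict A).prod (ν.restrict B)) := by
    rw [Measure.prod_restrict]
    exact hu.integrableOn
  rw [← Measure.prod_restrict]
  exact (integral_prod_symm u h1).symm

end Aux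

theorem stmt4 {S : Type*} (𝒜 : MeasurableSpace S) {F : MeasurableSpace S}
    (μ : Measure S) [IsProbabilityMeasure μ] (h𝒜 : 𝒜 ≤ F)
    (hsep : ∃ D : Set (Set S), D.Countable ∧ (∀ X ∈ D, MeasurableSet[𝒜] X) ∧
      ∀ X : Set S, MeasurableSet[𝒜] X → ∀ ε : ℝ≥0∞, 0 < ε → ∃ Y ∈ D, μ (X ∆ Y) < ε)
    (W : S × S → ℝ) (C : ℝ) (hbd : ∀ p, |W p| ≤ C) (hWmeas : Measurable[F.prod F] W)
    (g : S × S → ℝ) (hgmeas : Measurable[𝒜.prod F] g)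
    (hg : g =ᵐ[μ.prod μ] (μ.prod μ)[W | 𝒜.prod F]) :
    ∀ᵐ y ∂μ, (fun x => g (x, y)) =ᵐ[μ] μ[(fun x => W (x, y)) | 𝒜] := by
  classical
  obtain ⟨D, hDcount, hDmeas, hDdense⟩ := hsep
  -- `C` is nonnegative
  have hCnn : 0 ≤ C := by
    have h1 : μ Set.univ = 1 := measure_univ
    have hne : (Set.univ : Set S).Nonempty := by
      by_contra h
      rw [Set.not_nonempty_iff_eq_empty] at h
      rw [h, measure_empty] at h1
      exact one_ne_zero h1.symm
    obtain ⟨x, -⟩ := hne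
    exact (abs_nonneg _).trans (hbd (x, x))
  have hm : 𝒜.prod F ≤ F.prod F :=
    sup_le_sup (MeasurableSpace.comap_mono h𝒜) le_rfl
  haveI : SigmaFinite ((μ.prod μ).trim hm) := by
    haveI := isFiniteMeasure_trim (μ := μ.prod μ) hm
    infer_instance
  haveI : SigmaFinite (μ.trim h𝒜) := by
    haveI := isFiniteMeasure_trim (μ := μ) h𝒜
    infer_instance
  -- integrability of `W` and `g` on the product
  have hWint : Integrable W (μ.prod μ) := by
    refine ⟨hWmeas.aestronglyMeasurable, ?_⟩
    refine HasFiniteIntegral.of_bounded (C := C) ?_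
    exact Filter.Eventually.of_forall fun p => by
      simpa [Real.norm_eq_abs] using hbd p
  have hgint : Integrable g (μ.prod μ) := integrable_condExp.congr hg.symm
  -- a.e. boundedness of `g`
  have hgbd : ∀ᵐ p ∂(μ.prod μ), |g p| ≤ C := by
    have hCeq : ((C.toNNReal : NNReal) : ℝ) = C := Real.coe_toNNReal C hCnn
    have h1 : ∀ᵐ p ∂(μ.prod μ), |W p| ≤ ((C.toNNReal : NNReal) : ℝ) :=
      Filter.Eventually.of_forall fun p => hCeq.symm ▸ hbd p
    have h2 := ae_bdd_condExp_of_ae_bdd (m := 𝒜.prod F) h1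
    filter_upwards [hg, h2] with p hp hb
    rw [hp]
    rw [hCeq] at hb
    exact hb
  -- for every `𝒜`-measurable set `A`, the partial integrals agree a.e.
  have keyA : ∀ A : Set S, MeasurableSet[𝒜] A →
      (fun y => ∫ x in A, g (x, y) ∂μ) =ᵐ[μ] fun y => ∫ x in A, W (x, y) ∂μ := by
    intro A hA
    have hA' : MeasurableSet A := h𝒜 _ hA
    have hig : Integrable (fun y => ∫ x in A, g (x, y) ∂μ) μ :=
      fubini_slice_integrable hgint hA'
    have hiw : Integrable (fun y => ∫ x in A, W (x, y) ∂μ) μ :=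
      fubini_slice_integrable hWint hA'
    refine Integrable.ae_eq_of_forall_setIntegral_eq _ _ hig hiw ?_
    intro B hB _
    rw [fubini_slice_eq hgint hA' hB, fubini_slice_eq hWint hA' hB]
    have hAB : MeasurableSet[𝒜.prod F] (A ×ˢ B) := measurableSet_prod' hA hB
    calc ∫ p in A ×ˢ B, g p ∂(μ.prod μ)
        = ∫ p in A ×ˢ B, ((μ.prod μ)[W | 𝒜.prod F]) p ∂(μ.prod μ) :=
          integral_congr_ae (ae_restrict_of_ae hg)
      _ = ∫ p in A ×ˢ B, W p ∂(μ.prod μ) := setIntegral_condExp hm hWint hAB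
  -- the countable family of set-equalities holds simultaneously for a.e. `y`
  have hDae : ∀ᵐ y ∂μ, ∀ A ∈ D, ∫ x in A, g (x, y) ∂μ = ∫ x in A, W (x, y) ∂μ := by
    rw [ae_ball_iff hDcount]
    intro A hA
    exact keyA A (hDmeas A hA)
  -- slicewise boundedness and integrability of `g` for a.e. `y`
  have hswap : ∀ᵐ p ∂(μ.prod μ), |g (Prod.swap p)| ≤ C :=
    (Measure.measurePreserving_swap (μ := μ) (ν := μ)).quasiMeasurePreserving.ae hgbd
  have hbdslice : ∀ᵐ y ∂μ, ∀ᵐ x ∂μ, |g (x, y)| ≤ C := by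
    have := Measure.ae_ae_of_ae_prod hswap
    filter_upwards [this] with y hy
    filter_upwards [hy] with x hx
    exact hx
  have hintslice : ∀ᵐ y ∂μ, Integrable (fun x => g (x, y)) μ := hgint.prod_left_ae
  -- put everything together
  filter_upwards [hDae, hbdslice, hintslice] with y hDy hby hinty
  -- the slice of `W` at `y`
  have hWy_meas : Measurable fun x => W (x, y) :=
    hWmeas.comp measurable_prodMk_right
  have hWy_int : Integrable (fun x => W (x, y)) μ := by
    refine ⟨hWy_meas.aestronglyMeasurable, ?_⟩
    refine HasFiniteIntegral.of_bounded (C := C) ?_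
    exact Filter.Eventually.of_forall fun x => by
      simpa [Real.norm_eq_abs] using hbd (x, y)
  -- set integrals agree for all `𝒜`-measurable sets, by density
  have hset : ∀ s : Set S, MeasurableSet[𝒜] s →
      ∫ x in s, g (x, y) ∂μ = ∫ x in s, W (x, y) ∂μ := by
    intro s hs
    have hs' : MeasurableSet s := h𝒜 _ hs
    refine eq_of_forall_dist_le fun ε hε => ?_
    rw [Real.dist_eq]
    -- choose a good approximating set from `D`
    have hden : (0 : ℝ) < 2 * C + 1 := by linarith
    have hpos : (0 : ℝ≥0∞) < ENNReal.ofReal (ε / (2 * C + 1)) := by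
      rw [ENNReal.ofReal_pos]
      positivity
    obtain ⟨Y, hYD, hYlt⟩ := hDdense s hs _ hpos
    have hY𝒜 : MeasurableSet[𝒜] Y := hDmeas Y hYD
    have hY' : MeasurableSet Y := h𝒜 _ hY𝒜
    have hμfin : μ (s ∆ Y) ≠ ∞ := (measure_lt_top μ _).ne
    have htoReal : (μ (s ∆ Y)).toReal ≤ ε / (2 * C + 1) := by
      have := ENNReal.toReal_mono (by simp) hYlt.le
      calc (μ (s ∆ Y)).toReal ≤ (ENNReal.ofReal (ε / (2 * C + 1))).toReal := this
        _ = ε / (2 * C + 1) := ENNReal.toReal_ofReal (by positivity)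
    have hWbd : ∀ᵐ x ∂μ, |W (x, y)| ≤ C :=
      Filter.Eventually.of_forall fun x => hbd (x, y)
    have h1 : |∫ x in s, g (x, y) ∂μ - ∫ x in Y, g (x, y) ∂μ| ≤
        C * (μ (s ∆ Y)).toReal := abs_setIntegral_sub_le hinty hby hs' hY'
    have h2 : |∫ x in Y, W (x, y) ∂μ - ∫ x in s, W (x, y) ∂μ| ≤
        C * (μ (Y ∆ s)).toReal := abs_setIntegral_sub_le hWy_int hWbd hY' hs'
    have hYs : Y ∆ s = s ∆ Y := symmDiff_comm Y s
    rw [hYs] at h2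
    have hYeq : ∫ x in Y, g (x, y) ∂μ = ∫ x in Y, W (x, y) ∂μ := hDy Y hYD
    have hchain : |∫ x in s, g (x, y) ∂μ - ∫ x in s, W (x, y) ∂μ| ≤
        2 * C * (μ (s ∆ Y)).toReal := by
      calc |∫ x in s, g (x, y) ∂μ - ∫ x in s, W (x, y) ∂μ|
          = |(∫ x in s, g (x, y) ∂μ - ∫ x in Y, g (x, y) ∂μ) +
              (∫ x in Y, W (x, y) ∂μ - ∫ x in s, W (x, y) ∂μ)| := by
            rw [hYeq]; ring_nf
        _ ≤ |∫ x in s, g (x, y) ∂μ - ∫ x in Y, g (x, y) ∂μ| +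
              |∫ x in Y, W (x, y) ∂μ - ∫ x in s, W (x, y) ∂μ| := abs_add_le _ _
        _ ≤ C * (μ (s ∆ Y)).toReal + C * (μ (s ∆ Y)).toReal := add_le_add h1 h2
        _ = 2 * C * (μ (s ∆ Y)).toReal := by ring
    have hfinal : 2 * C * (μ (s ∆ Y)).toReal ≤ ε := by
      have hCnn2 : (0 : ℝ) ≤ 2 * C := by linarith
      have := mul_le_mul_of_nonneg_left htoReal hCnn2
      calc 2 * C * (μ (s ∆ Y)).toReal ≤ 2 * C * (ε / (2 * C + 1)) := this
        _ ≤ ε := by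
            rw [mul_div_assoc']
            rw [div_le_iff₀ hden]
            nlinarith [hε.le]
    exact hchain.trans hfinal
  -- conclude via the characterization of the conditional expectation
  refine ae_eq_condExp_of_forall_setIntegral_eq h𝒜 hWy_int ?_ ?_ ?_
  · intro s _ _
    exact hinty.integrableOn
  · intro s hs _
    exact hset s hs
  · exact StronglyMeasurable.aestronglyMeasurable
      ((slice_meas' hgmeas y).stronglyMeasurable)
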